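/- Let s and μ be real numbers with 0 < s < 1 and 0 < μ < √2 − 1, and define θ = (1 − s²)·((1 − μ²)² − 4μ²)/(4μs(1 − μ²)), η = 4μs(1 − μ²)/((1 − s²)(1 + μ²)(1 − μ² + 2μ)), and ζ = (1 − s²)(1 + μ²)(1 − μ² − 2μ)/(4μs(1 − μ²)). Then, setting s₁ = s, s₂ = θ, s₃ = η, s₄ = ζ and uₖ = (1 − sₖ²)/(2sₖ) for k = 1, 2, 3, 4, the parallelogram equation 2u₁² + 2u₂² = u₃² + u₄² holds. -/

import Mathlib

set_option maxHeartbeats 4000000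


/-- Wyss's two-parametric family: setting `s₁ = s`, `s₂ = θ(s,μ)`, `s₃ = η(s,μ)`,
`s₄ = ζ(s,μ)` and `uₖ = (1 - sₖ²)/(2sₖ)` solves the parallelogram equation. -/
theorem wyss_two_parametric_solution
    (s μ : ℝ) (hs₀ : 0 < s) (hs₁ : s < 1) (hμ₀ : 0 < μ) (hμ₁ : μ < Real.sqrt 2 - 1)
    (θ η ζ : ℝ)
    (hθ : θ = (1 - s ^ 2) * ((1 - μ ^ 2) ^ 2 - 4 * μ ^ 2) / (4 * μ * s * (1 - μ ^ 2)))
    (hη : η = 4 * μ * s * (1 - μ ^ 2) / ((1 - s ^ 2) * (1 + μ ^ 2) * (1 - μ ^ 2 + 2 * μ)))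
    (hζ : ζ = (1 - s ^ 2) * (1 + μ ^ 2) * (1 - μ ^ 2 - 2 * μ) / (4 * μ * s * (1 - μ ^ 2)))
    (u₁ u₂ u₃ u₄ : ℝ)
    (hu₁ : u₁ = (1 - s ^ 2) / (2 * s)) (hu₂ : u₂ = (1 - θ ^ 2) / (2 * θ))
    (hu₃ : u₃ = (1 - η ^ 2) / (2 * η)) (hu₄ : u₄ = (1 - ζ ^ 2) / (2 * ζ)) :
    2 * u₁ ^ 2 + 2 * u₂ ^ 2 = u₃ ^ 2 + u₄ ^ 2 := by
  have hroot : Real.sqrt 2 - 1 < 1 := by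
    have : Real.sqrt 2 < 2 := by
      nlinarith [Real.sq_sqrt (by norm_num : (2:ℝ) ≥ 0), Real.sqrt_nonneg 2]
    linarith
  have hμ1 : μ < 1 := lt_trans hμ₁ hroot
  have hs : s ≠ 0 := ne_of_gt hs₀
  have hμ : μ ≠ 0 := ne_of_gt hμ₀
  have hs2 : (1 : ℝ) - s ^ 2 > 0 := by nlinarith
  have hμ2 : (1 : ℝ) - μ ^ 2 > 0 := by nlinarith
  have hμp : (1 : ℝ) - μ ^ 2 + 2 * μ > 0 := by nlinarith
  have hμm : (1 : ℝ) - μ ^ 2 - 2 * μ > 0 := by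
    have h2 : μ + 1 < Real.sqrt 2 := by linarith
    have : (μ + 1) ^ 2 < 2 := by
      nlinarith [Real.sq_sqrt (by norm_num : (2:ℝ) ≥ 0), Real.sqrt_nonneg 2]
    nlinarith
  have hμpq : (1 : ℝ) + μ ^ 2 > 0 := by positivity
  have hdiff : (1 - μ ^ 2) ^ 2 - 4 * μ ^ 2 > 0 := by nlinarith
  have hθ0 : θ ≠ 0 := by
    rw [hθ]; positivity
  have hη0 : η ≠ 0 := by
    rw [hη]; positivity
  have hζ0 : ζ ≠ 0 := by
    rw [hζ]; positivity
  subst hu₁ hu₂ hu₃ hu₄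
  rw [hθ, hη, hζ] at *
  have : (1 - μ ^ 2) ^ 2 - μ ^ 2 * 4 ≠ 0 := by intro h; linarith
  field_simp
  ring
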